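/- Let z : ℝ → ℝ be four times continuously differentiable on a neighborhood of a point t. Then, as τ → 0⁺, the 5-instance finite difference quotient (8·z(t+τ) + z(t) − 6·z(t−τ) − 5·z(t−2τ) + 2·z(t−3τ))/(18τ) differs from z′(t) by O(τ³); equivalently, 8·z(t+τ) + z(t) − 6·z(t−τ) − 5·z(t−2τ) + 2·z(t−3τ) − 18τ·z′(t) = O(τ⁴) as τ → 0. -/

import Mathlib

open Asymptotics

/-- Mean value step: if `u 0 = 0` and `u' = v` on a ball around `0` with `v = O(hⁿ)`,
then `u = O(h^(n+1))`. -/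
lemma mvt_step {u v : ℝ → ℝ} {n : ℕ} {ε : ℝ} (hε : 0 < ε) (hu0 : u 0 = 0)
    (hd : ∀ x ∈ Metric.ball (0 : ℝ) ε, HasDerivAt u (v x) x)
    (hv : v =O[nhds 0] fun h => h ^ n) :
    u =O[nhds 0] fun h => h ^ (n + 1) := by
  obtain ⟨C, hC0, hC⟩ := hv.exists_nonneg
  rw [IsBigOWith, Metric.eventually_nhds_iff] at hC
  obtain ⟨δ, hδ, hCb⟩ := hC
  refine Asymptotics.isBigO_iff.mpr ⟨C, ?_⟩
  rw [Metric.eventually_nhds_iff]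
  refine ⟨min δ ε, lt_min hδ hε, fun h hh => ?_⟩
  rw [Real.dist_eq, sub_zero, lt_min_iff] at hh
  obtain ⟨hhδ, hhε⟩ := hh
  set s := Set.Icc (min 0 h) (max 0 h) with hs
  have habs : ∀ x ∈ s, |x| ≤ |h| := by
    rintro x ⟨hx1, hx2⟩
    rw [abs_le]
    constructor
    · exact le_trans (le_min (neg_nonpos.mpr (abs_nonneg h)) (neg_abs_le h)) hx1
    · exact le_trans hx2 (max_le (abs_nonneg h) (le_abs_self h))
  have hsub : s ⊆ Metric.ball (0 : ℝ) ε := by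
    intro x hx
    rw [Metric.mem_ball, Real.dist_eq, sub_zero]
    exact lt_of_le_of_lt (habs x hx) hhε
  have h0s : (0 : ℝ) ∈ s := ⟨min_le_left _ _, le_max_left _ _⟩
  have hhs : h ∈ s := ⟨min_le_right _ _, le_max_right _ _⟩
  have key := Convex.norm_image_sub_le_of_norm_hasDerivWithin_le
    (f := u) (f' := v) (C := C * |h| ^ n) (s := s)
    (fun x hx => (hd x (hsub hx)).hasDerivWithinAt)
    (fun x hx => by
      have hxδ : dist x 0 < δ := by
        rw [Real.dist_eq, sub_zero]
        exact lt_of_le_of_lt (habs x hx) hhδ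
      have hb := hCb hxδ
      calc ‖v x‖ ≤ C * ‖x ^ n‖ := hb
        _ = C * |x| ^ n := by rw [Real.norm_eq_abs, abs_pow]
        _ ≤ C * |h| ^ n :=
          mul_le_mul_of_nonneg_left (pow_le_pow_left₀ (abs_nonneg x) (habs x hx) n) hC0)
    (convex_Icc _ _) h0s hhs
  rw [hu0, sub_zero, sub_zero] at key
  calc ‖u h‖ ≤ C * |h| ^ n * ‖h‖ := key
    _ = C * ‖h ^ (n + 1)‖ := by
        rw [Real.norm_eq_abs, Real.norm_eq_abs, abs_pow, pow_succ]; ring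

/-- Truncation error of the 5-IFD look-ahead finite difference formula of type 2_3:
for `z` four times continuously differentiable near `t`, the difference quotient
`(8z(t+τ) + z(t) - 6z(t-τ) - 5z(t-2τ) + 2z(t-3τ))/(18τ)` differs from `z′(t)` by
`O(τ³)` as `τ → 0⁺`; equivalently the un-divided expression minus `18τ z′(t)` is
`O(τ⁴)` as `τ → 0`. -/
theorem fiveIFD_truncation_error (z : ℝ → ℝ) (t : ℝ) (hz : ContDiffAt ℝ 4 z t) :
    (fun τ : ℝ =>
        (8 * z (t + τ) + z t - 6 * z (t - τ) - 5 * z (t - 2 * τ) + 2 * z (t - 3 * τ)) / (18 * τ)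
          - deriv z t) =O[nhdsWithin 0 (Set.Ioi 0)] (fun τ : ℝ => τ ^ 3) ∧
    (fun τ : ℝ =>
        8 * z (t + τ) + z t - 6 * z (t - τ) - 5 * z (t - 2 * τ) + 2 * z (t - 3 * τ)
          - 18 * τ * deriv z t) =O[nhds 0] (fun τ : ℝ => τ ^ 4) := by
  -- Get an open set on which z is C⁴
  obtain ⟨u, hu, hzu⟩ := hz.contDiffOn le_rfl (by simp)
  obtain ⟨ε, hε, hball⟩ := Metric.mem_nhds_iff.mp hu
  have hzs : ContDiffOn ℝ 4 z (Metric.ball t ε) := hzu.mono hball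
  have hopen : IsOpen (Metric.ball t ε) := Metric.isOpen_ball
  set z1 := deriv z with hz1
  set z2 := deriv z1 with hz2
  set z3 := deriv z2 with hz3
  have h1 : ContDiffOn ℝ 3 z1 (Metric.ball t ε) :=
    hzs.deriv_of_isOpen hopen (by norm_num)
  have h2 : ContDiffOn ℝ 2 z2 (Metric.ball t ε) :=
    h1.deriv_of_isOpen hopen (by norm_num)
  have h3 : ContDiffOn ℝ 1 z3 (Metric.ball t ε) :=
    h2.deriv_of_isOpen hopen (by norm_num)
  have htmem : t ∈ Metric.ball t ε := Metric.mem_ball_self hε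
  -- derivative facts on the ball
  have hdz : ∀ x ∈ Metric.ball t ε, HasDerivAt z (z1 x) x := fun x hx =>
    ((hzs.differentiableOn (by norm_num)).differentiableAt
      (hopen.mem_nhds hx)).hasDerivAt
  have hdz1 : ∀ x ∈ Metric.ball t ε, HasDerivAt z1 (z2 x) x := fun x hx =>
    ((h1.differentiableOn (by norm_num)).differentiableAt
      (hopen.mem_nhds hx)).hasDerivAt
  have hdz2 : ∀ x ∈ Metric.ball t ε, HasDerivAt z2 (z3 x) x := fun x hx =>
    ((h2.differentiableOn (by norm_num)).differentiableAt
      (hopen.mem_nhds hx)).hasDerivAt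
  set a0 := z t
  set a1 := z1 t
  set a2 := z2 t
  set a3 := z3 t
  have hshift : ∀ h : ℝ, h ∈ Metric.ball (0 : ℝ) ε → t + h ∈ Metric.ball t ε := by
    intro h hh
    rw [Metric.mem_ball, Real.dist_eq] at hh ⊢
    simpa using hh
  -- the remainder functions
  set R3 : ℝ → ℝ := fun h => z3 (t + h) - a3 with hR3def
  set R2 : ℝ → ℝ := fun h => z2 (t + h) - (a2 + a3 * h) with hR2def
  set R1 : ℝ → ℝ := fun h => z1 (t + h) - (a1 + a2 * h + a3 / 2 * h ^ 2) with hR1def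
  set R0 : ℝ → ℝ := fun h =>
    z (t + h) - (a0 + a1 * h + a2 / 2 * h ^ 2 + a3 / 6 * h ^ 3) with hR0def
  -- R3 = O(h)
  have hR3 : R3 =O[nhds 0] fun h : ℝ => h ^ 1 := by
    have hd3 : HasDerivAt z3 (deriv z3 t) t :=
      ((h3.differentiableOn (by norm_num)).differentiableAt (hopen.mem_nhds htmem)).hasDerivAt
    have hO : (fun x => z3 x - z3 t) =O[nhds t] fun x => x - t :=
      hd3.hasFDerivAt.isBigO_sub
    have htend : Filter.Tendsto (fun h : ℝ => t + h) (nhds 0) (nhds t) := by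
      have : Filter.Tendsto (fun h : ℝ => t + h) (nhds 0) (nhds (t + 0)) :=
        (continuous_const.add continuous_id).tendsto 0
      simpa using this
    have := hO.comp_tendsto htend
    simp only [Function.comp_def, add_sub_cancel_left] at this
    simpa [pow_one] using this
  -- shift-derivative helper
  have hcomp : ∀ (f f' : ℝ → ℝ), (∀ x ∈ Metric.ball t ε, HasDerivAt f (f' x) x) →
      ∀ h ∈ Metric.ball (0 : ℝ) ε, HasDerivAt (fun h => f (t + h)) (f' (t + h)) h := by
    intro f f' hf h hh
    have := (hf (t + h) (hshift h hh)).comp h ((hasDerivAt_id h).const_add t)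
    simpa [Function.comp_def] using this
  -- R2 = O(h²)
  have hR2 : R2 =O[nhds 0] fun h : ℝ => h ^ 2 := by
    refine mvt_step hε (by simp [hR2def, a2]) (fun x hx => ?_) hR3
    have hc := hcomp z2 z3 hdz2 x hx
    have hp : HasDerivAt (fun h : ℝ => a2 + a3 * h) a3 x := by
      simpa using ((hasDerivAt_id x).const_mul a3).const_add a2
    simpa [hR2def, hR3def, Pi.sub_def] using hc.sub hp
  -- R1 = O(h³)
  have hR1 : R1 =O[nhds 0] fun h : ℝ => h ^ 3 := by
    refine mvt_step hε (by simp [hR1def, a1]) (fun x hx => ?_) hR2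
    have hc := hcomp z1 z2 hdz1 x hx
    have hp : HasDerivAt (fun h : ℝ => a1 + a2 * h + a3 / 2 * h ^ 2) (a2 + a3 * x) x := by
      have := (((hasDerivAt_id x).const_mul a2).const_add a1).add
        ((hasDerivAt_pow 2 x).const_mul (a3 / 2))
      simp only [Pi.add_def, id] at this
      refine this.congr_deriv ?_
      norm_num <;> ring
    simpa [hR1def, hR2def, Pi.sub_def] using hc.sub hp
  -- R0 = O(h⁴)
  have hR0 : R0 =O[nhds 0] fun h : ℝ => h ^ 4 := by
    refine mvt_step hε (by simp [hR0def, a0]) (fun x hx => ?_) hR1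
    have hc := hcomp z z1 hdz x hx
    have hp : HasDerivAt (fun h : ℝ => a0 + a1 * h + a2 / 2 * h ^ 2 + a3 / 6 * h ^ 3)
        (a1 + a2 * x + a3 / 2 * x ^ 2) x := by
      have := ((((hasDerivAt_id x).const_mul a1).const_add a0).add
        ((hasDerivAt_pow 2 x).const_mul (a2 / 2))).add
        ((hasDerivAt_pow 3 x).const_mul (a3 / 6))
      simp only [Pi.add_def, id] at this
      refine this.congr_deriv ?_
      norm_num <;> ring
    simpa [hR0def, hR1def, Pi.sub_def] using hc.sub hp
  -- scaled versions
  have hscale : ∀ c : ℝ, (fun h : ℝ => R0 (c * h)) =O[nhds 0] fun h : ℝ => h ^ 4 := by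
    intro c
    have htend : Filter.Tendsto (fun h : ℝ => c * h) (nhds 0) (nhds 0) := by
      have : Filter.Tendsto (fun h : ℝ => c * h) (nhds 0) (nhds (c * 0)) :=
        (continuous_const.mul continuous_id).tendsto 0
      simpa using this
    have h1' := hR0.comp_tendsto htend
    simp only [Function.comp_def] at h1'
    refine h1'.trans ?_
    have : (fun h : ℝ => (c * h) ^ 4) = fun h : ℝ => c ^ 4 * h ^ 4 := by
      funext h; ring
    rw [this]
    exact (isBigO_refl (fun h : ℝ => h ^ 4) _).const_mul_left _
  -- the combined error term
  set E : ℝ → ℝ := fun τ => 8 * z (t + τ) + z t - 6 * z (t - τ) - 5 * z (t - 2 * τ)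
    + 2 * z (t - 3 * τ) - 18 * τ * deriv z t with hEdef
  have hEexpand : ∀ τ : ℝ, E τ =
      8 * R0 (1 * τ) - 6 * R0 ((-1) * τ) - 5 * R0 ((-2) * τ) + 2 * R0 ((-3) * τ) := by
    intro τ
    have e0 : t + τ = t + 1 * τ := by ring
    have e1 : t - τ = t + (-1) * τ := by ring
    have e2 : t - 2 * τ = t + (-2) * τ := by ring
    have e3 : t - 3 * τ = t + (-3) * τ := by ring
    simp only [hEdef, hR0def, e0, e1, e2, e3, ← hz1]
    ring
  have hE : E =O[nhds 0] fun τ : ℝ => τ ^ 4 := by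
    have h' := ((((hscale 1).const_mul_left 8).sub ((hscale (-1)).const_mul_left 6)).sub
      ((hscale (-2)).const_mul_left 5)).add ((hscale (-3)).const_mul_left 2)
    exact h'.congr' (Filter.Eventually.of_forall fun τ => (hEexpand τ).symm)
      Filter.EventuallyEq.rfl
  refine ⟨?_, by simpa [hEdef] using hE⟩
  -- first part : divide by 18τ on the right-neighborhood filter
  have hinv : (fun τ : ℝ => (18 * τ)⁻¹) =O[nhdsWithin 0 (Set.Ioi 0)] fun τ : ℝ => τ⁻¹ := by
    refine Asymptotics.isBigO_iff.mpr ⟨(18 : ℝ)⁻¹, Filter.Eventually.of_forall fun τ => ?_⟩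
    rw [mul_inv, norm_mul]
    simp [abs_of_nonneg]
  have hEdiv : (fun τ : ℝ => E τ * (18 * τ)⁻¹) =O[nhdsWithin 0 (Set.Ioi 0)]
      fun τ : ℝ => τ ^ 4 * τ⁻¹ :=
    (hE.mono nhdsWithin_le_nhds).mul hinv
  have hpos : ∀ᶠ τ : ℝ in nhdsWithin 0 (Set.Ioi 0), τ ∈ Set.Ioi (0 : ℝ) :=
    eventually_mem_nhdsWithin
  refine (hEdiv.congr' ?_ ?_)
  · filter_upwards [hpos] with τ hτ
    have hτ0 : τ ≠ 0 := ne_of_gt hτ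
    simp only [hEdef]
    field_simp
    rfl
  · filter_upwards [hpos] with τ hτ
    have hτ0 : τ ≠ 0 := ne_of_gt hτ
    field_simp
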